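/- Let σ_k denote the k-th elementary symmetric polynomial on ℝⁿ and Γ_k = {λ ∈ ℝⁿ : σ_j(λ) > 0 for j = 1,…,k}. Then Γ_k is an open convex cone with vertex at the origin, symmetric under permutations of coordinates, and contains the positive cone Γ⁺ = {λ : λᵢ > 0 ∀i}. -/

import Mathlib

set_option maxHeartbeats 1000000


/-- The `k`-th elementary symmetric polynomial on `ℝⁿ`. -/
noncomputable def esymmFun (n k : ℕ) (lam : Fin n → ℝ) : ℝ :=
  ∑ t ∈ Finset.univ.powersetCard k, ∏ i ∈ t, lam i

/-- The Gårding cone `Γ_k = {λ : σ_j(λ) > 0, j = 1,…,k}`. -/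
def GammaK (n k : ℕ) : Set (Fin n → ℝ) :=
  {lam | ∀ j, 1 ≤ j → j ≤ k → 0 < esymmFun n j lam}

namespace Garding

open Polynomial Finset Topology Filter

variable {R : Type*} [CommRing R]

/-- generic elementary symmetric function -/
noncomputable def esG (n m : ℕ) (w : Fin n → R) : R :=
  ∑ t ∈ Finset.univ.powersetCard m, ∏ i ∈ t, w i

lemma esymmFun_eq_esG (n m : ℕ) (w : Fin n → ℝ) : esymmFun n m w = esG n m w := rfl

/-- the polynomial ∏ (X + w i) -/
noncomputable def Pgen (n : ℕ) (w : Fin n → R) : R[X] := ∏ i, (X + C (w i))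

lemma Pgen_coeff {n m : ℕ} (hmn : m ≤ n) (w : Fin n → R) :
    (Pgen n w).coeff (n - m) = esG n m w := by
  have hc : #(Finset.univ : Finset (Fin n)) - (n - m) = m := by simp; omega
  have h := Finset.prod_X_add_C_coeff (Finset.univ : Finset (Fin n)) w
      (k := n - m) (by simp)
  rw [Pgen, esG, h, hc]

lemma Pgen_shift {n : ℕ} (w : Fin n → R) (t : R) :
    taylor t (Pgen n w) = Pgen n (fun i => w i + t) := by
  rw [taylor_apply, Pgen, Polynomial.prod_comp, Pgen]
  refine Finset.prod_congr rfl fun i _ => ?_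
  rw [add_comp, X_comp, C_comp, C_add]
  ring

lemma hasse_eval {n m : ℕ} (hmn : m ≤ n) (w : Fin n → R) (t : R) :
    (hasseDeriv (n - m) (Pgen n w)).eval t = esG n m (fun i => w i + t) := by
  rw [← taylor_coeff, Pgen_shift, Pgen_coeff hmn]

lemma Pgen_eq_sum {n : ℕ} (w : Fin n → R) :
    Pgen n w = ∑ j ∈ Finset.range (n + 1), C (esG n j w) * X ^ (n - j) := by
  have h1 : Pgen n w = ((Finset.univ.val.map w).map fun r => X + C r).prod := by
    rw [Pgen, Finset.prod, Multiset.map_map]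
    rfl
  have hcard : Multiset.card (Finset.univ.val.map w) = n := by simp
  rw [h1, Multiset.prod_X_add_C_eq_sum_esymm, hcard]
  refine Finset.sum_congr rfl fun j _ => ?_
  rw [Finset.esymm_map_val]
  rfl

lemma hasse_eq_sum {n m : ℕ} (w : Fin n → R) :
    hasseDeriv (n - m) (Pgen n w) =
      ∑ j ∈ Finset.range (n + 1),
        C ((Nat.choose (n - j) (n - m) : R) * esG n j w) * X ^ ((n - j) - (n - m)) := by
  rw [Pgen_eq_sum, map_sum]
  refine Finset.sum_congr rfl fun j _ => ?_
  rw [C_mul_X_pow_eq_monomial, hasseDeriv_monomial, ← C_mul_X_pow_eq_monomial]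

lemma esG_shift_eq_sum {n m : ℕ} (hmn : m ≤ n) (w : Fin n → R) (t : R) :
    esG n m (fun i => w i + t) =
      ∑ j ∈ Finset.range (n + 1),
        (Nat.choose (n - j) (n - m) : R) * esG n j w * t ^ ((n - j) - (n - m)) := by
  rw [← hasse_eval hmn, hasse_eq_sum]
  rw [eval_finset_sum]
  refine Finset.sum_congr rfl fun j _ => ?_
  simp [mul_assoc]

lemma esG_zero {n : ℕ} (w : Fin n → R) : esG n 0 w = 1 := by
  simp [esG]

section RealFacts

lemma esG_smul {n m : ℕ} (c : ℝ) (w : Fin n → ℝ) :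
    esG n m (fun i => c * w i) = c ^ m * esG n m w := by
  rw [esG, esG, Finset.mul_sum]
  refine Finset.sum_congr rfl fun t ht => ?_
  have htc : t.card = m := (Finset.mem_powersetCard.1 ht).2
  rw [Finset.prod_mul_distrib, Finset.prod_const, htc]

lemma esG_pos_of_pos {n m : ℕ} (hmn : m ≤ n) (w : Fin n → ℝ) (hw : ∀ i, 0 < w i) :
    0 < esG n m w := by
  rw [esG]
  refine Finset.sum_pos (fun t ht => Finset.prod_pos fun i _ => hw i) ?_
  rw [← Finset.card_pos, Finset.card_powersetCard]
  simpa using Nat.choose_pos (by simpa using hmn)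

lemma mem_GammaK_iff {n k : ℕ} (lam : Fin n → ℝ) :
    lam ∈ GammaK n k ↔ ∀ j, 1 ≤ j → j ≤ k → 0 < esG n j lam := Iff.rfl

lemma GammaK_mono {n k j : ℕ} (hjk : j ≤ k) : GammaK n k ⊆ GammaK n j :=
  fun _ h i h1 h2 => h i h1 (h2.trans hjk)

lemma one_mem_GammaK {n k : ℕ} (hkn : k ≤ n) : (fun _ => (1 : ℝ)) ∈ GammaK n k := by
  intro j _ hjk
  exact esG_pos_of_pos (hjk.trans hkn) _ (fun _ => one_pos)

lemma smul_mem_GammaK {n k : ℕ} {t : ℝ} (ht : 0 < t) {lam : Fin n → ℝ}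
    (h : lam ∈ GammaK n k) : (fun i => t * lam i) ∈ GammaK n k := by
  intro j h1 h2
  rw [mem_GammaK_iff] at h
  have := h j h1 h2
  show 0 < esG n j fun i => t * lam i
  rw [esG_smul]
  positivity

/-- key positivity on the ray towards `e = (1,…,1)` -/
lemma star_pos {n m : ℕ} (hm1 : 1 ≤ m) (hmn : m ≤ n) {v : Fin n → ℝ}
    (hv : v ∈ GammaK n m) {t : ℝ} (ht : 0 ≤ t) :
    0 < esG n m (fun i => v i + t) := by
  rw [esG_shift_eq_sum hmn]
  rw [mem_GammaK_iff] at hv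
  have hterm : ∀ j ∈ Finset.range (n + 1),
      0 ≤ (Nat.choose (n - j) (n - m) : ℝ) * esG n j v * t ^ ((n - j) - (n - m)) := by
    intro j hjr
    have hjn : j ≤ n := by simpa [Nat.lt_succ_iff] using hjr
    rcases le_or_gt j m with hj | hj
    · rcases Nat.eq_zero_or_pos j with rfl | hj0
      · rw [esG_zero]; positivity
      · have := hv j hj0 hj
        positivity
    · have : Nat.choose (n - j) (n - m) = 0 := Nat.choose_eq_zero_of_lt (by omega)
      rw [this]
      simp
  refine Finset.sum_pos' hterm ⟨m, by simp [Nat.lt_succ_iff, hmn], ?_⟩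
  have h1 : (n - m) - (n - m) = 0 := by omega
  have h2 : Nat.choose (n - m) (n - m) = 1 := Nat.choose_self _
  rw [h1, h2, pow_zero]
  simpa using hv m hm1 le_rfl

lemma shift_mem_GammaK {n k : ℕ} (hkn : k ≤ n) {v : Fin n → ℝ}
    (hv : v ∈ GammaK n k) {t : ℝ} (ht : 0 ≤ t) : (fun i => v i + t) ∈ GammaK n k :=
  fun j h1 h2 => star_pos h1 (h2.trans hkn) (GammaK_mono h2 hv) ht

end RealFacts

section Rolle

lemma hasseDeriv_map' {S : Type*} [CommRing S] (f : R →+* S) (k : ℕ) (p : R[X]) :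
    (hasseDeriv k p).map f = hasseDeriv k (p.map f) := by
  ext i
  rw [coeff_map, hasseDeriv_coeff, hasseDeriv_coeff, coeff_map, map_mul, map_natCast]

lemma Pgen_map {S : Type*} [CommRing S] (f : R →+* S) {n : ℕ} (w : Fin n → R) :
    (Pgen n w).map f = Pgen n (fun i => f (w i)) := by
  rw [Pgen, Polynomial.map_prod, Pgen]
  refine Finset.prod_congr rfl fun i _ => ?_
  rw [Polynomial.map_add, Polynomial.map_X, Polynomial.map_C]

lemma hasse_card_natDegree {n m : ℕ} (hmn : m ≤ n) (w : Fin n → ℝ) :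
    Multiset.card (hasseDeriv (n - m) (Pgen n w)).roots = m ∧
      (hasseDeriv (n - m) (Pgen n w)).natDegree = m := by
  have hmonic : (Pgen n w).Monic :=
    monic_prod_of_monic _ _ (fun i _ => monic_X_add_C _)
  have hdeg : (Pgen n w).natDegree = n := by
    rw [Pgen, natDegree_prod _ _ (fun i _ => (monic_X_add_C (w i)).ne_zero)]
    simp
  have hroots : Multiset.card (Pgen n w).roots = n := by
    have h1 : Pgen n w
        = ((Finset.univ.val.map fun i => -w i).map fun a => X - C a).prod := by
      rw [Pgen, Finset.prod, Multiset.map_map]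
      refine congrArg _ (Multiset.map_congr rfl fun i _ => ?_)
      simp [sub_neg_eq_add]
    rw [h1, roots_multiset_prod_X_sub_C]
    simp
  have hrolle : ∀ l, n - l ≤ Multiset.card (derivative^[l] (Pgen n w)).roots := by
    intro l
    induction l with
    | zero => simp [hroots]
    | succ l ih =>
        have h2 := Polynomial.card_roots_le_derivative (derivative^[l] (Pgen n w))
        rw [Function.iterate_succ_apply']
        omega
  have hDeq : derivative^[n - m] (Pgen n w)
      = C ((Nat.factorial (n - m) : ℝ)) * hasseDeriv (n - m) (Pgen n w) := by
    rw [← smul_eq_C_mul, Nat.cast_smul_eq_nsmul ℝ,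
      ← Polynomial.factorial_smul_hasseDeriv (k := n - m) (R := ℝ)]
    rfl
  have hfac : ((Nat.factorial (n - m) : ℝ)) ≠ 0 := by
    exact_mod_cast (Nat.factorial_pos (n - m)).ne'
  have hlow : m ≤ Multiset.card (hasseDeriv (n - m) (Pgen n w)).roots := by
    have h1 := hrolle (n - m)
    rw [hDeq, roots_C_mul _ hfac] at h1
    omega
  have hdh : (hasseDeriv (n - m) (Pgen n w)).natDegree = m := by
    rw [natDegree_hasseDeriv, hdeg]
    omega
  have hup := Polynomial.card_roots' (hasseDeriv (n - m) (Pgen n w))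
  exact ⟨by omega, hdh⟩

/-- hyperbolicity in the direction (1,…,1) -/
lemma hyperbolic_e {n m : ℕ} (hm1 : 1 ≤ m) (hmn : m ≤ n) (y : Fin n → ℝ) (z : ℂ)
    (h : esG n m (fun i => (y i : ℂ) + z) = 0) : z.im = 0 := by
  obtain ⟨hcard, hdeg⟩ := hasse_card_natDegree hmn y
  set q := hasseDeriv (n - m) (Pgen n y) with hq
  have hq0 : q ≠ 0 := by
    intro h0
    rw [h0] at hcard
    simp at hcard
    omega
  have hinj : Function.Injective (Complex.ofRealHom : ℝ →+* ℂ) :=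
    Complex.ofReal_injective
  have hqm0 : q.map (Complex.ofRealHom : ℝ →+* ℂ) ≠ 0 :=
    (Polynomial.map_ne_zero_iff hinj).2 hq0
  have hmapcomm : q.map (Complex.ofRealHom : ℝ →+* ℂ)
      = hasseDeriv (n - m) (Pgen n (fun i => (y i : ℂ))) := by
    rw [hq, hasseDeriv_map', Pgen_map]
    rfl
  have heval : (q.map (Complex.ofRealHom : ℝ →+* ℂ)).eval z
      = esG n m (fun i => (y i : ℂ) + z) := by
    rw [hmapcomm, hasse_eval hmn]
  have hzmem : z ∈ (q.map (Complex.ofRealHom : ℝ →+* ℂ)).roots :=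
    Polynomial.mem_roots'.2 ⟨hqm0, by rwa [IsRoot, heval]⟩
  have hsub := Polynomial.map_roots_le hqm0
  have hcardle : Multiset.card (q.map (Complex.ofRealHom : ℝ →+* ℂ)).roots ≤ m := by
    have := Polynomial.card_roots' (q.map (Complex.ofRealHom : ℝ →+* ℂ))
    rwa [natDegree_map_eq_of_injective hinj, hdeg] at this
  have heq : q.roots.map (Complex.ofRealHom : ℝ →+* ℂ)
      = (q.map (Complex.ofRealHom : ℝ →+* ℂ)).roots := by
    refine Multiset.eq_of_le_of_card_le hsub ?_
    rw [Multiset.card_map, hcard]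
    exact hcardle
  rw [← heq] at hzmem
  obtain ⟨r, _, hr⟩ := Multiset.mem_map.1 hzmem
  rw [← hr]
  simp

end Rolle

section Cx

/-- the polynomial `z ↦ σ_m(a + z b)` -/
noncomputable def qp (n m : ℕ) (a b : Fin n → ℂ) : ℂ[X] :=
  ∑ S ∈ Finset.univ.powersetCard m, ∏ i ∈ S, (C (a i) + C (b i) * X)

lemma qp_eval {n m : ℕ} (a b : Fin n → ℂ) (z : ℂ) :
    (qp n m a b).eval z = esG n m (fun i => a i + z * b i) := by
  rw [qp, eval_finset_sum, esG]
  refine Finset.sum_congr rfl fun S _ => ?_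
  rw [eval_prod]
  refine Finset.prod_congr rfl fun i _ => ?_
  simp only [eval_add, eval_mul, eval_C, eval_X]
  ring

lemma prodlin_natDegree_le {n : ℕ} (a b : Fin n → ℂ) (S : Finset (Fin n)) :
    (∏ i ∈ S, (C (a i) + C (b i) * X)).natDegree ≤ S.card := by
  have h1 : ∀ i : Fin n, (C (a i) + C (b i) * X).natDegree ≤ 1 := by
    intro i
    refine le_trans (natDegree_add_le _ _) ?_
    simp only [natDegree_C, max_le_iff]
    exact ⟨Nat.zero_le _, le_trans (natDegree_C_mul_le _ _) natDegree_X_le⟩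
  refine le_trans (natDegree_prod_le _ _) ?_
  refine le_trans (Finset.sum_le_sum fun i _ => h1 i) ?_
  simp

lemma prodlin_coeff_card {n : ℕ} (a b : Fin n → ℂ) (S : Finset (Fin n)) :
    (∏ i ∈ S, (C (a i) + C (b i) * X)).coeff S.card = ∏ i ∈ S, b i := by
  induction S using Finset.cons_induction with
  | empty => simp
  | cons i S hi ih =>
    rw [Finset.prod_cons, Finset.prod_cons, Finset.card_cons, add_mul, coeff_add,
      coeff_C_mul, mul_assoc, coeff_C_mul,
      coeff_eq_zero_of_natDegree_lt
        (lt_of_le_of_lt (prodlin_natDegree_le a b S) (Nat.lt_succ_self _)),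
      mul_zero, zero_add, coeff_X_mul, ih]

lemma prodlin_coeff_bound {n : ℕ} (a b : Fin n → ℂ) {R0 : ℝ} (hR0 : 0 ≤ R0)
    (hR : ∀ i, ‖a i‖ + ‖b i‖ ≤ R0) (S : Finset (Fin n)) (j : ℕ) :
    ‖(∏ i ∈ S, (C (a i) + C (b i) * X)).coeff j‖ ≤ R0 ^ S.card := by
  induction S using Finset.cons_induction generalizing j with
  | empty =>
    simp only [Finset.prod_empty, Finset.card_empty, pow_zero, coeff_one]
    split <;> simp
  | cons i S hi ih =>
    rw [Finset.prod_cons, Finset.card_cons, add_mul, mul_assoc]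
    have hai : 0 ≤ ‖a i‖ := norm_nonneg _
    have hbi : 0 ≤ ‖b i‖ := norm_nonneg _
    have habR : ‖a i‖ + ‖b i‖ ≤ R0 := hR i
    have hpow : (0:ℝ) ≤ R0 ^ S.card := by positivity
    set P := ∏ x ∈ S, (C (a x) + C (b x) * X) with hP
    cases j with
    | zero =>
      rw [coeff_add, coeff_C_mul, coeff_C_mul, mul_coeff_zero, coeff_X_zero, zero_mul, mul_zero,
        add_zero, norm_mul]
      have h1 := ih 0
      have := mul_le_mul (le_trans (by linarith) habR : ‖a i‖ ≤ R0) h1 (norm_nonneg _) hR0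
      rw [pow_succ']
      linarith
    | succ j =>
      rw [coeff_add, coeff_C_mul, coeff_C_mul, coeff_X_mul]
      have h1 := ih (j + 1)
      have h2 := ih j
      have hle : ‖a i * P.coeff (j + 1) + b i * P.coeff j‖
          ≤ ‖a i‖ * ‖P.coeff (j + 1)‖ + ‖b i‖ * ‖P.coeff j‖ := by
        refine le_trans (norm_add_le _ _) ?_
        rw [norm_mul, norm_mul]
      have ha' := mul_le_mul_of_nonneg_left h1 hai
      have hb' := mul_le_mul_of_nonneg_left h2 hbi
      have hfin : (‖a i‖ + ‖b i‖) * R0 ^ S.card ≤ R0 * R0 ^ S.card :=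
        mul_le_mul_of_nonneg_right habR hpow
      rw [pow_succ']
      nlinarith

lemma qp_natDegree_le {n m : ℕ} (a b : Fin n → ℂ) : (qp n m a b).natDegree ≤ m := by
  refine natDegree_sum_le_of_forall_le _ _ fun S hS => ?_
  have := (Finset.mem_powersetCard.1 hS).2
  exact this ▸ prodlin_natDegree_le a b S

lemma qp_coeff_top {n m : ℕ} (a b : Fin n → ℂ) : (qp n m a b).coeff m = esG n m b := by
  rw [qp, finset_sum_coeff, esG]
  refine Finset.sum_congr rfl fun S hS => ?_
  have hc := (Finset.mem_powersetCard.1 hS).2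
  rw [← hc, prodlin_coeff_card]

lemma qp_coeff_bound {n m : ℕ} (a b : Fin n → ℂ) {R0 : ℝ} (hR0 : 0 ≤ R0)
    (hR : ∀ i, ‖a i‖ + ‖b i‖ ≤ R0) (j : ℕ) :
    ‖(qp n m a b).coeff j‖ ≤ (n.choose m : ℝ) * R0 ^ m := by
  rw [qp, finset_sum_coeff]
  refine le_trans (norm_sum_le _ _) ?_
  have h1 : ∀ S ∈ Finset.univ.powersetCard m,
      ‖(∏ i ∈ S, (C (a i) + C (b i) * X)).coeff j‖ ≤ R0 ^ m := by
    intro S hS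
    have hc := (Finset.mem_powersetCard.1 hS).2
    exact hc ▸ prodlin_coeff_bound a b hR0 hR S j
  refine le_trans (Finset.sum_le_sum h1) ?_
  rw [Finset.sum_const, Finset.card_powersetCard, nsmul_eq_mul]
  simp

lemma norm_multiset_prod' (s : Multiset ℂ) : ‖s.prod‖ = (s.map fun x => ‖x‖).prod := by
  induction s using Multiset.induction with
  | empty => simp
  | cons x s ih => simp [norm_mul, ih]

lemma pow_card_le_multiset_prod (s : Multiset ℝ) {ε : ℝ} (hε : 0 ≤ ε)
    (h : ∀ x ∈ s, ε ≤ x) : ε ^ Multiset.card s ≤ s.prod := by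
  induction s using Multiset.induction with
  | empty => simp
  | cons x s ih =>
    have hx : ε ≤ x := h x (Multiset.mem_cons_self _ _)
    have hs : ε ^ Multiset.card s ≤ s.prod := ih fun y hy => h y (Multiset.mem_cons_of_mem hy)
    rw [Multiset.card_cons, Multiset.prod_cons, pow_succ']
    have hεp : (0:ℝ) ≤ ε ^ Multiset.card s := by positivity
    exact mul_le_mul hx hs hεp (le_trans hε hx)

/-- Cauchy-type root bound -/
lemma root_bound {p : ℂ[X]} {m : ℕ} (hm : 1 ≤ m) (hdeg : p.natDegree = m) {c B : ℝ}
    (hc : 0 < c) (hlc : c ≤ ‖p.coeff m‖) (hB : ∀ j, j < m → ‖p.coeff j‖ ≤ B) {z : ℂ}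
    (hz : p.eval z = 0) : ‖z‖ ≤ 1 + m * B / c := by
  have hB0 : 0 ≤ B := le_trans (norm_nonneg _) (hB 0 hm)
  rcases le_or_gt ‖z‖ 1 with h1 | h1
  · have : (0:ℝ) ≤ m * B / c := by positivity
    linarith
  have he := Polynomial.eval_eq_sum_range (x := z) (p := p)
  rw [hz, hdeg] at he
  rw [Finset.sum_range_succ] at he
  have hsum : p.coeff m * z ^ m = -∑ j ∈ Finset.range m, p.coeff j * z ^ j := by
    linear_combination -he
  have hnorm : c * ‖z‖ ^ m ≤ (m : ℝ) * (B * ‖z‖ ^ (m - 1)) := by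
    have h2 : ‖p.coeff m * z ^ m‖ ≤ ∑ j ∈ Finset.range m, ‖p.coeff j * z ^ j‖ := by
      rw [hsum, norm_neg]
      exact norm_sum_le _ _
    have h3 : ∑ j ∈ Finset.range m, ‖p.coeff j * z ^ j‖
        ≤ ∑ _j ∈ Finset.range m, B * ‖z‖ ^ (m - 1) := by
      refine Finset.sum_le_sum fun j hj => ?_
      have hjm := Finset.mem_range.1 hj
      rw [norm_mul, norm_pow]
      refine mul_le_mul (hB j hjm) (pow_le_pow_right₀ (le_of_lt h1) (by omega)) (by positivity)
        hB0
    have h4 : c * ‖z‖ ^ m ≤ ‖p.coeff m * z ^ m‖ := by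
      rw [norm_mul, norm_pow]
      exact mul_le_mul_of_nonneg_right hlc (by positivity)
    have h5 : ∑ _j ∈ Finset.range m, B * ‖z‖ ^ (m - 1) = (m : ℝ) * (B * ‖z‖ ^ (m - 1)) := by
      rw [Finset.sum_const, Finset.card_range, nsmul_eq_mul]
    linarith
  have hzpow : ‖z‖ ^ m = ‖z‖ * ‖z‖ ^ (m - 1) := by
    rw [← pow_succ']
    congr 1
    omega
  have hpos : (0:ℝ) < ‖z‖ ^ (m - 1) := by positivity
  have h6 : c * ‖z‖ ≤ (m : ℝ) * B := by
    rw [hzpow, ← mul_assoc] at hnorm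
    have := (mul_le_mul_iff_of_pos_right hpos).1 (by linarith [hnorm] : c * ‖z‖ * ‖z‖ ^ (m-1) ≤ (m : ℝ) * B * ‖z‖ ^ (m-1))
    exact this
  have h7 : ‖z‖ ≤ (m : ℝ) * B / c := by
    rw [le_div_iff₀ hc]
    linarith
  linarith

/-- elementary Hurwitz: a near-root yields a nearby true root -/
lemma exists_root_near {p : ℂ[X]} {m : ℕ} (hm : 1 ≤ m) (hdeg : p.natDegree = m) (z : ℂ)
    {ε : ℝ} (hε : 0 < ε) (hsmall : ‖p.eval z‖ < ‖p.leadingCoeff‖ * ε ^ m) :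
    ∃ r ∈ p.roots, ‖z - r‖ < ε := by
  have hp0 : p ≠ 0 := by
    intro h
    rw [h] at hdeg
    simp at hdeg
    omega
  have hcard : Multiset.card p.roots = m := by
    rw [← hdeg]
    exact Polynomial.splits_iff_card_roots.1 (IsAlgClosed.splits p)
  have hfact := Polynomial.C_leadingCoeff_mul_prod_multiset_X_sub_C
    (p := p) (by rw [hcard, hdeg])
  by_contra hcon
  push_neg at hcon
  have heval : ‖p.eval z‖ = ‖p.leadingCoeff‖ * ((p.roots.map fun r => ‖z - r‖).prod) := by
    conv_lhs => rw [← hfact]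
    rw [eval_mul, eval_C, norm_mul, Polynomial.eval_multiset_prod, Multiset.map_map,
      norm_multiset_prod', Multiset.map_map]
    congr 2
    refine Multiset.map_congr rfl fun r _ => ?_
    simp
  have hge : ε ^ m ≤ (p.roots.map fun r => ‖z - r‖).prod := by
    have := pow_card_le_multiset_prod (p.roots.map fun r => ‖z - r‖) hε.le ?_
    · rwa [Multiset.card_map, hcard] at this
    · intro x hx
      obtain ⟨r, hr, rfl⟩ := Multiset.mem_map.1 hx
      exact hcon r hr
  have hlcpos : 0 < ‖p.leadingCoeff‖ := by
    simp only [norm_pos_iff]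
    exact Polynomial.leadingCoeff_ne_zero.2 hp0
  nlinarith

end Cx

section Homotopy

lemma esG_ofReal {n m : ℕ} (w : Fin n → ℝ) :
    esG n m (fun i => (w i : ℂ)) = ((esG n m w : ℝ) : ℂ) := by
  rw [esG, esG]
  push_cast
  rfl

lemma continuous_esG {α : Type*} [TopologicalSpace α] {n m : ℕ} (F : Fin n → α → ℂ)
    (hF : ∀ i, Continuous (F i)) :
    Continuous fun u => esG n m (fun i => F i u) := by
  unfold esG
  refine continuous_finset_sum _ fun t _ => ?_
  exact continuous_finset_prod _ fun i _ => hF i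

lemma continuous_esG_real {α : Type*} [TopologicalSpace α] {n m : ℕ} (F : Fin n → α → ℝ)
    (hF : ∀ i, Continuous (F i)) :
    Continuous fun u => esG n m (fun i => F i u) := by
  unfold esG
  refine continuous_finset_sum _ fun t _ => ?_
  exact continuous_finset_prod _ fun i _ => hF i

lemma icc_induction {P : ℝ → Prop} {c : ℝ} (hc : 0 ≤ c) (h0 : P 0)
    (hS : IsClosed {u | u ∈ Set.Icc (0:ℝ) c ∧ P u})
    (hT : IsClosed {u | u ∈ Set.Icc (0:ℝ) c ∧ ¬ P u}) :
    ∀ u ∈ Set.Icc (0:ℝ) c, P u := by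
  intro u hu
  by_contra hPu
  have hpre := isPreconnected_Icc (a := (0:ℝ)) (b := c)
  rw [isPreconnected_closed_iff] at hpre
  obtain ⟨v, hv⟩ := hpre _ _ hS hT
    (fun w hw => by
      by_cases h : P w
      exacts [Or.inl ⟨hw, h⟩, Or.inr ⟨hw, h⟩])
    ⟨0, Set.left_mem_Icc.2 hc, Set.left_mem_Icc.2 hc, h0⟩
    ⟨u, hu, hu, hPu⟩
  exact hv.2.2.2 hv.2.1.2

lemma main_homotopy {n m : ℕ} (hm1 : 1 ≤ m) (hmn : m ≤ n) {x : Fin n → ℝ}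
    (hx : x ∈ GammaK n m) (y : Fin n → ℝ) {s : ℝ} (hs : 0 < s) :
    ∀ r ∈ (qp n m (fun i => (y i : ℂ) + s * Complex.I) (fun i => (x i : ℂ))).roots,
      r.im < 0 := by
  classical
  set xu : ℝ → Fin n → ℝ := fun u i => (1 - u) + u * x i with hxu_def
  have hxuG : ∀ u ∈ Set.Icc (0:ℝ) 1, xu u ∈ GammaK n m := by
    intro u hu
    rcases eq_or_lt_of_le hu.1 with h0 | h0
    · have he : xu u = fun _ => (1:ℝ) := by
        funext i
        simp [hxu_def, ← h0]
      rw [he]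
      exact one_mem_GammaK hmn
    · have hdiv : (0:ℝ) ≤ (1 - u) / u := div_nonneg (by linarith [hu.2]) h0.le
      have h1 : (fun i => u * ((fun j => x j + (1 - u) / u) i)) ∈ GammaK n m :=
        smul_mem_GammaK h0 (shift_mem_GammaK hmn hx hdiv)
      have he : xu u = fun i => u * ((fun j => x j + (1 - u) / u) i) := by
        funext i
        simp only [hxu_def]
        field_simp
        ring
      rw [he]
      exact h1
  set a : Fin n → ℂ := fun i => (y i : ℂ) + s * Complex.I with ha_def
  set b : ℝ → Fin n → ℂ := fun u i => ((xu u i : ℝ) : ℂ) with hb_def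
  set p : ℝ → ℂ[X] := fun u => qp n m a (b u) with hp_def
  have htop : ∀ u, (p u).coeff m = ((esG n m (xu u) : ℝ) : ℂ) := by
    intro u
    rw [hp_def, qp_coeff_top, hb_def, esG_ofReal]
  have hsigma_cont : Continuous fun u : ℝ => esG n m (xu u) := by
    refine continuous_esG_real _ fun i => ?_
    exact (continuous_const.sub continuous_id).add (continuous_id.mul continuous_const)
  obtain ⟨u0, hu0, hminOn⟩ := isCompact_Icc.exists_isMinOn
    (Set.nonempty_Icc.2 zero_le_one) hsigma_cont.continuousOn
  set c := esG n m (xu u0) with hc_def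
  have hcpos : 0 < c := (hxuG u0 hu0) m hm1 le_rfl
  have hcle : ∀ u ∈ Set.Icc (0:ℝ) 1, c ≤ esG n m (xu u) := fun u hu =>
    isMinOn_iff.1 hminOn u hu
  have hlcnorm : ∀ u ∈ Set.Icc (0:ℝ) 1, c ≤ ‖(p u).coeff m‖ := by
    intro u hu
    rw [htop u]
    refine le_trans (hcle u hu) ?_
    rw [Complex.norm_real, Real.norm_eq_abs]
    exact le_abs_self _
  have hdeg : ∀ u ∈ Set.Icc (0:ℝ) 1, (p u).natDegree = m := by
    intro u hu
    refine le_antisymm (qp_natDegree_le a (b u)) (le_natDegree_of_ne_zero ?_)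
    intro h0
    have h1 := hlcnorm u hu
    rw [h0] at h1
    simp at h1
    linarith
  have hne : ∀ u ∈ Set.Icc (0:ℝ) 1, p u ≠ 0 := by
    intro u hu h0
    have := hlcnorm u hu
    rw [h0] at this
    simp at this
    linarith
  have hlcn : ∀ u ∈ Set.Icc (0:ℝ) 1, c ≤ ‖(p u).leadingCoeff‖ := by
    intro u hu
    rw [Polynomial.leadingCoeff, hdeg u hu]
    exact hlcnorm u hu
  have heval : ∀ u w, (p u).eval w = esG n m (fun i => a i + w * b u i) := fun u w =>
    qp_eval a (b u) w
  have hFcont : Continuous fun q : ℝ × ℂ => esG n m (fun i => a i + q.2 * b q.1 i) := by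
    refine continuous_esG _ fun i => ?_
    refine continuous_const.add (continuous_snd.mul ?_)
    exact Complex.continuous_ofReal.comp
      ((continuous_const.sub continuous_fst).add (continuous_fst.mul continuous_const))
  have hreal : ∀ u (t : ℝ), (p u).eval (t : ℂ) ≠ 0 := by
    intro u t h0
    rw [heval] at h0
    have h1 : (fun i => a i + (t:ℂ) * b u i)
        = fun i => (((fun j => y j + t * xu u j) i : ℝ) : ℂ) + (s * Complex.I) := by
      funext i
      simp only [ha_def, hb_def]
      push_cast
      ring
    rw [h1] at h0
    have h2 := hyperbolic_e hm1 hmn _ _ h0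
    simp at h2
    exact hs.ne' h2
  set P : ℝ → Prop := fun u => ∀ r ∈ (p u).roots, r.im < 0 with hP_def
  have hP0 : P 0 := by
    intro r hr
    obtain ⟨hne0, hroot⟩ := Polynomial.mem_roots'.1 hr
    rw [Polynomial.IsRoot, heval] at hroot
    have h1 : (fun i => a i + r * b 0 i) = fun i => ((y i : ℝ) : ℂ) + (r + s * Complex.I) := by
      funext i
      simp only [ha_def, hb_def, hxu_def]
      push_cast
      ring
    rw [h1] at hroot
    have h2 := hyperbolic_e hm1 hmn y _ hroot
    simp [Complex.add_im] at h2
    linarith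
  have hSclosed : IsClosed {u | u ∈ Set.Icc (0:ℝ) 1 ∧ P u} := by
    refine IsSeqClosed.isClosed ?_
    intro useq u huseq hulim
    have huIcc : u ∈ Set.Icc (0:ℝ) 1 :=
      isClosed_Icc.isSeqClosed (fun j => (huseq j).1) hulim
    refine ⟨huIcc, ?_⟩
    intro r hr
    obtain ⟨hpne, hroot⟩ := Polynomial.mem_roots'.1 hr
    by_contra hge
    push_neg at hge
    have him0 : r.im ≠ 0 := by
      intro h0
      have hre : (r.re : ℂ) = r := by
        apply Complex.ext <;> simp [h0]
      exact hreal u r.re (by rw [hre]; exact hroot)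
    have himpos : 0 < r.im := lt_of_le_of_ne hge (Ne.symm him0)
    have hc1 : Continuous fun v : ℝ => (p v).eval r := by
      have h2 : (fun v : ℝ => (p v).eval r)
          = (fun q : ℝ × ℂ => esG n m (fun i => a i + q.2 * b q.1 i)) ∘ (fun v => (v, r)) := by
        funext v
        simp [heval]
      rw [h2]
      exact hFcont.comp (continuous_id.prodMk continuous_const)
    have htend : Filter.Tendsto (fun j => (p (useq j)).eval r) Filter.atTop (𝓝 0) := by
      have := (hc1.continuousAt (x := u)).tendsto.comp hulim
      rwa [hroot] at this
    have hev : ∀ᶠ j in Filter.atTop, ‖(p (useq j)).eval r‖ < c * r.im ^ m := by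
      have h0 : Filter.Tendsto (fun j => ‖(p (useq j)).eval r‖) Filter.atTop (𝓝 0) := by
        simpa using htend.norm
      exact h0.eventually_lt_const (by positivity)
    obtain ⟨j, hj⟩ := hev.exists
    have hsmall : ‖(p (useq j)).eval r‖ < ‖(p (useq j)).leadingCoeff‖ * r.im ^ m :=
      lt_of_lt_of_le hj (mul_le_mul_of_nonneg_right (hlcn _ (huseq j).1) (by positivity))
    obtain ⟨ρ, hρ, hρnear⟩ := exists_root_near hm1 (hdeg _ (huseq j).1) r himpos hsmall
    have hρim : ρ.im < 0 := (huseq j).2 ρ hρ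
    have habs : |r.im - ρ.im| ≤ ‖r - ρ‖ := by
      have := Complex.abs_im_le_norm (r - ρ)
      simpa [Complex.sub_im] using this
    have h5 : r.im - ρ.im ≤ |r.im - ρ.im| := le_abs_self _
    linarith
  have hTclosed : IsClosed {u | u ∈ Set.Icc (0:ℝ) 1 ∧ ¬ P u} := by
    refine IsSeqClosed.isClosed ?_
    intro useq u huseq hulim
    have huIcc : u ∈ Set.Icc (0:ℝ) 1 :=
      isClosed_Icc.isSeqClosed (fun j => (huseq j).1) hulim
    refine ⟨huIcc, ?_⟩
    have hroots : ∀ j, ∃ r ∈ (p (useq j)).roots, 0 ≤ r.im := by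
      intro j
      have h1 : ¬ ∀ r ∈ (p (useq j)).roots, r.im < 0 := (huseq j).2
      push_neg at h1
      obtain ⟨r, hr1, hr2⟩ := h1
      exact ⟨r, hr1, hr2⟩
    choose rseq hrin hrim using hroots
    set R0 : ℝ := 1 + |s| + ∑ i, (|y i| + |x i|) with hR0_def
    have hR0pos : 0 ≤ R0 := by positivity
    have hRbound : ∀ u' ∈ Set.Icc (0:ℝ) 1, ∀ i, ‖a i‖ + ‖b u' i‖ ≤ R0 := by
      intro u' hu' i
      have h1 : ‖a i‖ ≤ |y i| + |s| := by
        refine le_trans (norm_add_le _ _) ?_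
        simp [Complex.norm_real, Complex.norm_I]
      have h2 : ‖b u' i‖ ≤ 1 + |x i| := by
        rw [hb_def]
        simp only [Complex.norm_real, Real.norm_eq_abs]
        refine le_trans (abs_add_le _ _) ?_
        rw [abs_mul]
        have hu1 : |1 - u'| ≤ 1 := by
          rw [abs_le]
          constructor <;> [linarith [hu'.2]; linarith [hu'.1]]
        have hu2 : |u'| ≤ 1 := by
          rw [abs_le]
          constructor <;> [linarith [hu'.1]; linarith [hu'.2]]
        nlinarith [abs_nonneg (x i), abs_nonneg u']
      have h3 : |y i| + |x i| ≤ ∑ i', (|y i'| + |x i'|) :=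
        Finset.single_le_sum (f := fun i' => |y i'| + |x i'|)
          (fun i' _ => by positivity) (Finset.mem_univ i)
      linarith
    set B := (n.choose m : ℝ) * R0 ^ m with hB_def
    set M := 1 + m * B / c with hM_def
    have hbound : ∀ j, ‖rseq j‖ ≤ M := by
      intro j
      refine root_bound hm1 (hdeg _ (huseq j).1) hcpos (hlcnorm _ (huseq j).1)
        (fun j' _ => qp_coeff_bound a (b (useq j)) hR0pos (hRbound _ (huseq j).1) j') ?_
      exact (Polynomial.mem_roots'.1 (hrin j)).2
    have hmem : ∀ j, rseq j ∈ Metric.closedBall (0:ℂ) M := by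
      intro j
      rw [Metric.mem_closedBall, dist_zero_right]
      exact hbound j
    obtain ⟨ρ, hρmem, φ, hφmono, hρlim⟩ :=
      (isCompact_closedBall (0:ℂ) M).tendsto_subseq hmem
    have hjoint : Filter.Tendsto (fun j => (useq (φ j), rseq (φ j))) Filter.atTop (𝓝 (u, ρ)) :=
      (hulim.comp hφmono.tendsto_atTop).prodMk_nhds hρlim
    have h1 : Filter.Tendsto
        (fun j => esG n m (fun i => a i + (rseq (φ j)) * b (useq (φ j)) i))
        Filter.atTop (𝓝 (esG n m (fun i => a i + ρ * b u i))) := by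
      have hcomp := (hFcont.tendsto (u, ρ)).comp hjoint
      exact hcomp
    have h2 : ∀ j, esG n m (fun i => a i + (rseq (φ j)) * b (useq (φ j)) i) = 0 := by
      intro j
      rw [← heval]
      exact (Polynomial.mem_roots'.1 (hrin (φ j))).2
    have hzero : esG n m (fun i => a i + ρ * b u i) = 0 := by
      have h3 : Filter.Tendsto
          (fun j => esG n m (fun i => a i + (rseq (φ j)) * b (useq (φ j)) i))
          Filter.atTop (𝓝 0) := by
        simp only [h2]
        exact tendsto_const_nhds
      exact tendsto_nhds_unique h1 h3
    have hρroot : ρ ∈ (p u).roots :=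
      Polynomial.mem_roots'.2 ⟨hne _ huIcc, by rw [Polynomial.IsRoot, heval]; exact hzero⟩
    have hρim : 0 ≤ ρ.im :=
      ge_of_tendsto ((Complex.continuous_im.continuousAt (x := ρ)).tendsto.comp hρlim)
        (Filter.Eventually.of_forall fun j => hrim (φ j))
    intro hPu
    exact absurd (hPu ρ hρroot) (not_lt.2 hρim)
  have hfinal := icc_induction zero_le_one hP0 hSclosed hTclosed 1
    (Set.right_mem_Icc.2 zero_le_one)
  have hb1 : b 1 = fun i => ((x i : ℝ) : ℂ) := by
    funext i
    simp [hb_def, hxu_def]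
  intro r hr
  refine hfinal r ?_
  show r ∈ (qp n m a (b 1)).roots
  rw [hb1]
  exact hr

end Homotopy

section Dir

lemma esG_conj {n m : ℕ} (w : Fin n → ℂ) :
    esG n m (fun i => (starRingEnd ℂ) (w i)) = (starRingEnd ℂ) (esG n m w) := by
  rw [esG, esG, map_sum]
  refine Finset.sum_congr rfl fun t _ => ?_
  rw [map_prod]

lemma hyperbolic_dir {n m : ℕ} (hm1 : 1 ≤ m) (hmn : m ≤ n) {x : Fin n → ℝ}
    (hx : x ∈ GammaK n m) (y : Fin n → ℝ) (z : ℂ)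
    (hz : esG n m (fun i => (y i : ℂ) + z * (x i : ℂ)) = 0) : z.im = 0 := by
  by_contra him
  have key : ∀ w : ℂ, 0 < w.im →
      esG n m (fun i => (y i : ℂ) + w * (x i : ℂ)) = 0 → False := by
    intro w hw hzero
    set G : ℝ → ℂ :=
      fun t => esG n m (fun i => ((y i : ℂ) + (t : ℂ) * Complex.I) + w * (x i : ℂ))
      with hG_def
    have hGcont : Continuous G := by
      refine continuous_esG _ fun i => ?_
      exact (continuous_const.add (Complex.continuous_ofReal.mul continuous_const)).add
        continuous_const
    have hG0 : G 0 = 0 := by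
      rw [hG_def]
      have he : (fun i => ((y i : ℂ) + ((0:ℝ) : ℂ) * Complex.I) + w * (x i : ℂ))
          = fun i => (y i : ℂ) + w * (x i : ℂ) := by
        funext i
        push_cast
        ring
      simp only [he]
      exact hzero
    set c' := esG n m x with hc'_def
    have hc'pos : 0 < c' := hx m hm1 le_rfl
    have hsmall : ∀ᶠ t in 𝓝 (0:ℝ), ‖G t‖ < c' * w.im ^ m := by
      have h1 : Filter.Tendsto (fun t => ‖G t‖) (𝓝 0) (𝓝 0) := by
        have h2 := hGcont.tendsto 0
        rw [hG0] at h2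
        simpa using h2.norm
      exact h1.eventually_lt_const (by positivity)
    obtain ⟨t, htsm, htpos⟩ :=
      ((hsmall.filter_mono nhdsWithin_le_nhds).and
        (eventually_mem_nhdsWithin (s := Set.Ioi (0:ℝ)))).exists
    set q := qp n m (fun i => (y i : ℂ) + (t : ℂ) * Complex.I) (fun i => (x i : ℂ)) with hq_def
    have hqtop : q.coeff m = ((c' : ℝ) : ℂ) := by
      rw [hq_def, qp_coeff_top, esG_ofReal]
    have hqdeg : q.natDegree = m := by
      refine le_antisymm (qp_natDegree_le _ _) (le_natDegree_of_ne_zero ?_)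
      rw [hqtop]
      exact_mod_cast hc'pos.ne'
    have hqlc : ‖q.leadingCoeff‖ = c' := by
      rw [Polynomial.leadingCoeff, hqdeg, hqtop, Complex.norm_real, Real.norm_eq_abs,
        abs_of_pos hc'pos]
    have heval : q.eval w = G t := by
      rw [hq_def, qp_eval, hG_def]
    have hsmall2 : ‖q.eval w‖ < ‖q.leadingCoeff‖ * w.im ^ m := by
      rw [heval, hqlc]
      exact htsm
    obtain ⟨ρ, hρ, hρnear⟩ := exists_root_near hm1 hqdeg w hw hsmall2
    have hρneg := main_homotopy hm1 hmn hx y htpos ρ hρ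
    have habs : |w.im - ρ.im| ≤ ‖w - ρ‖ := by
      have h3 := Complex.abs_im_le_norm (w - ρ)
      simpa [Complex.sub_im] using h3
    have h5 : w.im - ρ.im ≤ |w.im - ρ.im| := le_abs_self _
    linarith
  rcases lt_or_gt_of_ne him with hneg | hpos
  · refine key ((starRingEnd ℂ) z) (by simpa using neg_pos.2 hneg) ?_
    have h1 : (fun i => (y i : ℂ) + ((starRingEnd ℂ) z) * (x i : ℂ))
        = fun i => (starRingEnd ℂ) ((y i : ℂ) + z * (x i : ℂ)) := by
      funext i
      rw [map_add, map_mul, Complex.conj_ofReal, Complex.conj_ofReal]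
    rw [h1, esG_conj, hz, map_zero]
  · exact key z hpos hz

end Dir

section Endgame

lemma add_pos_esG {n m : ℕ} (hm1 : 1 ≤ m) (hmn : m ≤ n) {x y : Fin n → ℝ}
    (hx : x ∈ GammaK n m) (hy : y ∈ GammaK n m) :
    0 < esG n m (fun i => y i + x i) := by
  classical
  set yα : ℝ → Fin n → ℝ := fun α i => α * y i + (1 - α) with hyα_def
  have hyαG : ∀ α ∈ Set.Icc (0:ℝ) 1, yα α ∈ GammaK n m := by
    intro α hα
    rcases eq_or_lt_of_le hα.1 with h0 | h0
    · have he : yα α = fun _ => (1:ℝ) := by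
        funext i
        simp [hyα_def, ← h0]
      rw [he]
      exact one_mem_GammaK hmn
    · have hdiv : (0:ℝ) ≤ (1 - α) / α := div_nonneg (by linarith [hα.2]) h0.le
      have h1 : (fun i => α * ((fun j => y j + (1 - α) / α) i)) ∈ GammaK n m :=
        smul_mem_GammaK h0 (shift_mem_GammaK hmn hy hdiv)
      have he : yα α = fun i => α * ((fun j => y j + (1 - α) / α) i) := by
        funext i
        simp only [hyα_def]
        field_simp
      rw [he]
      exact h1
  set c' := esG n m x with hc'_def
  have hc'pos : 0 < c' := hx m hm1 le_rfl
  -- the complex polynomial family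
  set q : ℝ → ℂ[X] :=
    fun α => qp n m (fun i => ((yα α i : ℝ) : ℂ)) (fun i => (x i : ℂ)) with hq_def
  have hqtop : ∀ α, (q α).coeff m = ((c' : ℝ) : ℂ) := by
    intro α
    rw [hq_def, qp_coeff_top, esG_ofReal]
  have hqdeg : ∀ α, (q α).natDegree = m := by
    intro α
    refine le_antisymm (qp_natDegree_le _ _) (le_natDegree_of_ne_zero ?_)
    rw [hqtop]
    exact_mod_cast hc'pos.ne'
  have hqlc : ∀ α, ‖(q α).leadingCoeff‖ = c' := by
    intro α
    rw [Polynomial.leadingCoeff, hqdeg, hqtop, Complex.norm_real, Real.norm_eq_abs,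
      abs_of_pos hc'pos]
  have hqne : ∀ α, q α ≠ 0 := by
    intro α h0
    have h2 : ((c' : ℝ) : ℂ) = 0 := by
      rw [← hqtop α, h0]
      simp
    exact hc'pos.ne (by exact_mod_cast h2.symm)
  have heval : ∀ α (w : ℂ),
      (q α).eval w = esG n m (fun i => ((yα α i : ℝ) : ℂ) + w * (x i : ℂ)) := by
    intro α w
    rw [hq_def, qp_eval]
  have hevalR : ∀ α (t : ℝ),
      (q α).eval (t : ℂ) = ((esG n m (fun i => yα α i + t * x i) : ℝ) : ℂ) := by
    intro α t
    rw [heval]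
    have he : (fun i => ((yα α i : ℝ) : ℂ) + (t:ℂ) * (x i : ℂ))
        = fun i => (((fun j => yα α j + t * x j) i : ℝ) : ℂ) := by
      funext i
      push_cast
      ring
    rw [he, esG_ofReal]
  -- all complex roots are real
  have hrootsreal : ∀ α ∈ Set.Icc (0:ℝ) 1, ∀ ρ ∈ (q α).roots, ρ.im = 0 := by
    intro α hα ρ hρ
    have h1 := (Polynomial.mem_roots'.1 hρ).2
    rw [Polynomial.IsRoot, heval] at h1
    exact hyperbolic_dir hm1 hmn hx (yα α) ρ h1
  -- boundary positivity
  have hbdry : ∀ α ∈ Set.Icc (0:ℝ) 1, 0 < esG n m (fun i => yα α i + 0 * x i) := by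
    intro α hα
    have he : (fun i => yα α i + 0 * x i) = yα α := by
      funext i
      ring
    rw [he]
    exact (hyαG α hα) m hm1 le_rfl
  -- joint continuity (real)
  have hGcont : Continuous fun qq : ℝ × ℝ =>
      esG n m (fun i => yα qq.1 i + qq.2 * x i) := by
    refine continuous_esG_real _ fun i => ?_
    refine Continuous.add ?_ (continuous_snd.mul continuous_const)
    exact (continuous_fst.mul continuous_const).add (continuous_const.sub continuous_fst)
  set P : ℝ → Prop :=
    fun α => ∀ t : ℝ, 0 ≤ t → esG n m (fun i => yα α i + t * x i) ≠ 0 with hP_def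
  have hP0 : P 0 := by
    intro t ht h0
    rcases eq_or_lt_of_le ht with h1 | h1
    · have := hbdry 0 (Set.left_mem_Icc.2 zero_le_one)
      rw [← h1] at h0
      rw [h0] at this
      exact lt_irrefl _ this
    · have he : (fun i => yα 0 i + t * x i) = fun i => t * ((fun j => x j + 1 / t) i) := by
        funext i
        simp only [hyα_def]
        field_simp
        ring
      rw [he, esG_smul] at h0
      have h2 := star_pos hm1 hmn hx (le_of_lt (by positivity : (0:ℝ) < 1 / t))
      have h3 : (0:ℝ) < t ^ m * esG n m (fun j => x j + 1 / t) := by positivity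
      rw [h0] at h3
      exact lt_irrefl _ h3
  have hSclosed : IsClosed {α | α ∈ Set.Icc (0:ℝ) 1 ∧ P α} := by
    refine IsSeqClosed.isClosed ?_
    intro useq u huseq hulim
    have huIcc : u ∈ Set.Icc (0:ℝ) 1 :=
      isClosed_Icc.isSeqClosed (fun j => (huseq j).1) hulim
    refine ⟨huIcc, ?_⟩
    intro t ht h0
    have ht0 : 0 < t := by
      rcases eq_or_lt_of_le ht with h1 | h1
      · exfalso
        rw [← h1] at h0
        have h2 := hbdry u huIcc
        rw [h0] at h2
        exact lt_irrefl _ h2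
      · exact h1
    -- Hurwitz
    have hc1 : Continuous fun v : ℝ => (q v).eval (t : ℂ) := by
      have h2 : (fun v : ℝ => (q v).eval (t : ℂ))
          = (fun qq : ℝ × ℝ =>
              ((esG n m (fun i => yα qq.1 i + qq.2 * x i) : ℝ) : ℂ)) ∘ (fun v => (v, t)) := by
        funext v
        simp [hevalR]
      rw [h2]
      exact (Complex.continuous_ofReal.comp hGcont).comp
        (continuous_id.prodMk continuous_const)
    have htend : Filter.Tendsto (fun j => (q (useq j)).eval (t:ℂ)) Filter.atTop (𝓝 0) := by
      have h3 := (hc1.continuousAt (x := u)).tendsto.comp hulim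
      have h4 : (q u).eval (t:ℂ) = 0 := by
        rw [hevalR, h0]
        simp
      rwa [h4] at h3
    have hev : ∀ᶠ j in Filter.atTop, ‖(q (useq j)).eval (t:ℂ)‖ < c' * (t / 2) ^ m := by
      have h5 : Filter.Tendsto (fun j => ‖(q (useq j)).eval (t:ℂ)‖) Filter.atTop (𝓝 0) := by
        simpa using htend.norm
      exact h5.eventually_lt_const (by positivity)
    obtain ⟨j, hj⟩ := hev.exists
    have hsmall2 : ‖(q (useq j)).eval (t:ℂ)‖ < ‖(q (useq j)).leadingCoeff‖ * (t / 2) ^ m := by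
      rw [hqlc]
      exact hj
    obtain ⟨ρ, hρ, hρnear⟩ := exists_root_near hm1 (hqdeg (useq j)) (t:ℂ)
      (by positivity) hsmall2
    have hρim : ρ.im = 0 := hrootsreal (useq j) (huseq j).1 ρ hρ
    have hρre : (ρ.re : ℂ) = ρ := by
      apply Complex.ext <;> simp [hρim]
    have hdist : |t - ρ.re| < t / 2 := by
      have h6 : ((t:ℂ) - ρ).re = t - ρ.re := by simp
      have h7 := Complex.abs_re_le_norm ((t:ℂ) - ρ)
      rw [h6] at h7
      calc |t - ρ.re| ≤ ‖(t:ℂ) - ρ‖ := h7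
        _ < t / 2 := hρnear
    have hρpos : 0 ≤ ρ.re := by
      have := abs_lt.1 hdist
      linarith
    have hzero : esG n m (fun i => yα (useq j) i + ρ.re * x i) = 0 := by
      have h8 := (Polynomial.mem_roots'.1 hρ).2
      rw [Polynomial.IsRoot, ← hρre, hevalR] at h8
      exact_mod_cast h8
    exact (huseq j).2 ρ.re hρpos hzero
  have hTclosed : IsClosed {α | α ∈ Set.Icc (0:ℝ) 1 ∧ ¬ P α} := by
    refine IsSeqClosed.isClosed ?_
    intro useq u huseq hulim
    have huIcc : u ∈ Set.Icc (0:ℝ) 1 :=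
      isClosed_Icc.isSeqClosed (fun j => (huseq j).1) hulim
    refine ⟨huIcc, ?_⟩
    have hroots : ∀ j, ∃ t : ℝ, 0 ≤ t ∧ esG n m (fun i => yα (useq j) i + t * x i) = 0 := by
      intro j
      have h1 : ¬ ∀ t : ℝ, 0 ≤ t → esG n m (fun i => yα (useq j) i + t * x i) ≠ 0 :=
        (huseq j).2
      push_neg at h1
      exact h1
    choose tseq htpos htzero using hroots
    set R0 : ℝ := 1 + ∑ i, (|y i| + |x i|) with hR0_def
    have hR0pos : 0 ≤ R0 := by positivity
    have hRbound : ∀ α ∈ Set.Icc (0:ℝ) 1, ∀ i,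
        ‖((yα α i : ℝ) : ℂ)‖ + ‖((x i : ℝ) : ℂ)‖ ≤ R0 := by
      intro α hα i
      rw [Complex.norm_real, Complex.norm_real, Real.norm_eq_abs, Real.norm_eq_abs]
      have h1 : |yα α i| ≤ |y i| + 1 := by
        simp only [hyα_def]
        refine le_trans (abs_add_le _ _) ?_
        rw [abs_mul]
        have hα1 : |α| ≤ 1 := by
          rw [abs_le]
          constructor <;> [linarith [hα.1]; linarith [hα.2]]
        have hα2 : |1 - α| ≤ 1 := by
          rw [abs_le]
          constructor <;> [linarith [hα.2]; linarith [hα.1]]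
        nlinarith [abs_nonneg (y i)]
      have h3 : |y i| + |x i| ≤ ∑ i', (|y i'| + |x i'|) :=
        Finset.single_le_sum (f := fun i' => |y i'| + |x i'|)
          (fun i' _ => by positivity) (Finset.mem_univ i)
      linarith
    set B := (n.choose m : ℝ) * R0 ^ m with hB_def
    set M := 1 + m * B / c' with hM_def
    have hbound : ∀ j, tseq j ≤ M := by
      intro j
      have h1 : (q (useq j)).eval ((tseq j : ℝ) : ℂ) = 0 := by
        rw [hevalR, htzero]
        simp
      have h2 := root_bound hm1 (hqdeg (useq j)) hc'pos
        (by rw [hqtop, Complex.norm_real, Real.norm_eq_abs, abs_of_pos hc'pos])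
        (fun j' _ => qp_coeff_bound _ _ hR0pos (hRbound _ (huseq j).1) j') h1
      rw [Complex.norm_real, Real.norm_eq_abs, abs_of_nonneg (htpos j)] at h2
      exact h2
    have hmem : ∀ j, tseq j ∈ Set.Icc (0:ℝ) M := fun j => ⟨htpos j, hbound j⟩
    obtain ⟨t0, ht0mem, φ, hφmono, ht0lim⟩ :=
      (isCompact_Icc (a := (0:ℝ)) (b := M)).tendsto_subseq hmem
    have hjoint : Filter.Tendsto (fun j => (useq (φ j), tseq (φ j))) Filter.atTop
        (𝓝 (u, t0)) :=
      (hulim.comp hφmono.tendsto_atTop).prodMk_nhds ht0lim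
    have h1 : Filter.Tendsto
        (fun j => esG n m (fun i => yα (useq (φ j)) i + (tseq (φ j)) * x i))
        Filter.atTop (𝓝 (esG n m (fun i => yα u i + t0 * x i))) := by
      have hcomp := (hGcont.tendsto (u, t0)).comp hjoint
      exact hcomp
    have h2 : Filter.Tendsto
        (fun j => esG n m (fun i => yα (useq (φ j)) i + (tseq (φ j)) * x i))
        Filter.atTop (𝓝 0) := by
      simp only [fun j => htzero (φ j)]
      exact tendsto_const_nhds
    have hzero := tendsto_nhds_unique h1 h2
    intro hPu
    exact hPu t0 ht0mem.1 hzero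
  have hfinal := icc_induction zero_le_one hP0 hSclosed hTclosed 1
    (Set.right_mem_Icc.2 zero_le_one)
  -- IVT
  set f : ℝ → ℝ := fun t => esG n m (fun i => y i + t * x i) with hf_def
  have hfP : ∀ t : ℝ, 0 ≤ t → f t ≠ 0 := by
    intro t ht
    have h1 := hfinal t ht
    have he : (fun i => yα 1 i + t * x i) = fun i => y i + t * x i := by
      funext i
      simp [hyα_def]
    rw [he] at h1
    exact h1
  have hf0 : 0 < f 0 := by
    have he : (fun i => y i + 0 * x i) = y := by
      funext i
      ring
    rw [hf_def]
    simp only [he]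
    exact hy m hm1 le_rfl
  have hfcont : Continuous f := by
    refine continuous_esG_real _ fun i => ?_
    exact continuous_const.add (continuous_id.mul continuous_const)
  have hf1 : 0 < f 1 := by
    by_contra h1
    push_neg at h1
    have h2 : f 1 < 0 := lt_of_le_of_ne h1 (hfP 1 zero_le_one)
    have h3 : (0:ℝ) ∈ Set.Icc (f 1) (f 0) := ⟨h2.le, hf0.le⟩
    obtain ⟨t, htmem, htval⟩ := intermediate_value_Icc' zero_le_one hfcont.continuousOn h3
    exact hfP t htmem.1 htval
  have he : (fun i => y i + x i) = fun i => y i + 1 * x i := by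
    funext i
    ring
  rw [he]
  exact hf1

lemma add_mem_GammaK {n k : ℕ} (hkn : k ≤ n) {x y : Fin n → ℝ}
    (hx : x ∈ GammaK n k) (hy : y ∈ GammaK n k) :
    (fun i => y i + x i) ∈ GammaK n k := by
  intro j hj1 hjk
  exact add_pos_esG hj1 (hjk.trans hkn) (GammaK_mono hjk hx) (GammaK_mono hjk hy)

end Endgame

lemma esG_perm {n m : ℕ} (σ : Equiv.Perm (Fin n)) (lam : Fin n → ℝ) :
    esG n m (fun i => lam (σ i)) = esG n m lam := by
  rw [esG, esG]
  refine Finset.sum_nbij' (i := fun S => S.image σ) (j := fun S => S.image σ.symm)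
    ?_ ?_ ?_ ?_ ?_
  · intro S hS
    rw [Finset.mem_powersetCard] at hS ⊢
    exact ⟨Finset.subset_univ _,
      by rw [Finset.card_image_of_injective _ σ.injective, hS.2]⟩
  · intro S hS
    rw [Finset.mem_powersetCard] at hS ⊢
    exact ⟨Finset.subset_univ _,
      by rw [Finset.card_image_of_injective _ σ.symm.injective, hS.2]⟩
  · intro S hS
    rw [Finset.image_image]
    simp
  · intro S hS
    rw [Finset.image_image]
    simp
  · intro S hS
    rw [Finset.prod_image (fun a _ b _ h => σ.injective h)]

end Garding

theorem gammaK_open_convex_symmetric_cone' (n k : ℕ) (hn : 1 ≤ n) (hk1 : 1 ≤ k)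
    (hkn : k ≤ n) :
    IsOpen (GammaK n k) ∧ Convex ℝ (GammaK n k) ∧
    (∀ t : ℝ, 0 < t → ∀ lam ∈ GammaK n k, t • lam ∈ GammaK n k) ∧
    (∀ σ : Equiv.Perm (Fin n), ∀ lam ∈ GammaK n k, (lam ∘ σ) ∈ GammaK n k) ∧
    {lam : Fin n → ℝ | ∀ i, 0 < lam i} ⊆ GammaK n k := by
  have hcone : ∀ t : ℝ, 0 < t → ∀ lam ∈ GammaK n k, t • lam ∈ GammaK n k := by
    intro t ht lam hlam
    have h1 := Garding.smul_mem_GammaK ht hlam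
    have he : t • lam = fun i => t * lam i := by
      funext i
      simp
    rw [he]
    exact h1
  refine ⟨?_, ?_, hcone, ?_, ?_⟩
  · -- open
    have h1 : GammaK n k
        = ⋂ j ∈ Finset.Icc 1 k, {lam : Fin n → ℝ | 0 < esymmFun n j lam} := by
      ext lam
      constructor
      · intro h
        refine Set.mem_iInter₂.2 fun j hj => ?_
        have h2 := Finset.mem_Icc.1 hj
        exact h j h2.1 h2.2
      · intro h j hj1 hj2
        exact Set.mem_iInter₂.1 h j (Finset.mem_Icc.2 ⟨hj1, hj2⟩)
    rw [h1]
    refine isOpen_biInter_finset fun j hj => ?_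
    have hc : Continuous fun lam : Fin n → ℝ => esymmFun n j lam :=
      Garding.continuous_esG_real (fun i (lam : Fin n → ℝ) => lam i)
        (fun i => continuous_apply i)
    exact isOpen_lt continuous_const hc
  · -- convex
    intro p hp q hq a b ha hb hab
    rcases eq_or_lt_of_le ha with h0 | h0
    · have hb1 : b = 1 := by linarith
      have he : a • p + b • q = q := by
        rw [← h0, hb1]
        simp
      rw [he]
      exact hq
    rcases eq_or_lt_of_le hb with h1 | h1
    · have ha1 : a = 1 := by linarith
      have he : a • p + b • q = p := by
        rw [← h1, ha1]
        simp
      rw [he]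
      exact hp
    · have hap := hcone a h0 p hp
      have hbq := hcone b h1 q hq
      have h2 := Garding.add_mem_GammaK hkn hap hbq
      have he : a • p + b • q = fun i => (b • q) i + (a • p) i := by
        funext i
        simp [add_comm]
      rw [he]
      exact h2
  · -- symmetric
    intro σ lam hlam j hj1 hj2
    have h1 : esymmFun n j (lam ∘ σ) = esymmFun n j lam := Garding.esG_perm σ lam
    rw [h1]
    exact hlam j hj1 hj2
  · -- positive cone
    intro lam hlam j hj1 hj2
    exact Garding.esG_pos_of_pos (hj2.trans hkn) lam hlam

/-- `Γ_k` is an open convex symmetric cone with vertex at the origin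
containing the positive cone `Γ⁺`. -/
theorem gammaK_open_convex_symmetric_cone (n k : ℕ) (hn : 1 ≤ n) (hk1 : 1 ≤ k)
    (hkn : k ≤ n) :
    IsOpen (GammaK n k) ∧ Convex ℝ (GammaK n k) ∧
    (∀ t : ℝ, 0 < t → ∀ lam ∈ GammaK n k, t • lam ∈ GammaK n k) ∧
    (∀ σ : Equiv.Perm (Fin n), ∀ lam ∈ GammaK n k, (lam ∘ σ) ∈ GammaK n k) ∧
    {lam : Fin n → ℝ | ∀ i, 0 < lam i} ⊆ GammaK n k :=
  gammaK_open_convex_symmetric_cone' n k hn hk1 hkn
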